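/- Let N be a compact Riemann surface and u : N → ℝ a smooth nonnegative function, not identically zero, such that log u is subharmonic on the open set where u > 0 and u vanishes only on a finite set. Then u is a positive constant. -/

import Mathlib

/-!
STATEMENT 6: Let N be a compact Riemann surface and u : N → ℝ a smooth
nonnegative function, not identically zero, vanishing only on a finite set,
such that log u is subharmonic on the open set {u > 0}.  Then u is a positive
constant.

N is modeled as a compact connected surface charted on ℂ.  Subharmonicity of
log u on {u > 0} is expressed through the submean inequality over small circles
in the charts (`SubmeanAt`).
-/

/-- The submean inequality for a function `g` on ℂ at the point `z`: for all
sufficiently small radii r, the value at z is at most the average of g on the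
circle of radius r about z. -/
def SubmeanAt (g : ℂ → ℝ) (z : ℂ) : Prop :=
  ∃ R, 0 < R ∧ ∀ r : ℝ, 0 < r → r < R →
    g z ≤ (2 * Real.pi)⁻¹ *
      ∫ θ in (0:ℝ)..(2 * Real.pi), g (z + r * Complex.exp (θ * Complex.I))

theorem stmt6 (N : Type) [TopologicalSpace N] [CompactSpace N] [ConnectedSpace N]
    [ChartedSpace ℂ N]        -- N is a (compact, connected) Riemann surface
    (u : N → ℝ) (hu : Continuous u)
    (h0 : ∀ x, 0 ≤ u x)                 -- u is nonnegative
    (hne : ∃ x, u x ≠ 0)                -- u is not identically zero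
    (hfin : {x | u x = 0}.Finite)       -- u vanishes only on a finite set
    -- log u is subharmonic on {u > 0} (submean inequality in the charts):
    (hsub : ∀ x, u x ≠ 0 →
      SubmeanAt (fun z => Real.log (u ((chartAt ℂ x).symm z))) (chartAt ℂ x x)) :
    ∃ c : ℝ, 0 < c ∧ ∀ x, u x = c := by
  obtain ⟨x₀, -, hx₀⟩ := isCompact_univ.exists_isMaxOn Set.univ_nonempty hu.continuousOn
  set M := u x₀ with hMdef
  have hMmax : ∀ y, u y ≤ M := fun y => hx₀ (Set.mem_univ y)
  obtain ⟨y₀, hy₀⟩ := hne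
  have hMpos : 0 < M := lt_of_lt_of_le (lt_of_le_of_ne (h0 y₀) (Ne.symm hy₀)) (hMmax y₀)
  have hπ : (0:ℝ) < Real.pi := Real.pi_pos
  set S : Set N := {y | u y = M} with hSdef
  have hSopen : IsOpen S := by
    rw [isOpen_iff_mem_nhds]
    intro x hx
    have hux : u x = M := hx
    have huxpos : 0 < u x := hux ▸ hMpos
    set φ := chartAt ℂ x with hφ
    set z₀ := φ x with hz₀
    obtain ⟨R, hR, hineq⟩ := hsub x (ne_of_gt huxpos)
    obtain ⟨ρ, hρ, hρball⟩ := Metric.isOpen_iff.mp φ.open_target z₀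
      (φ.map_source (mem_chart_source ℂ x))
    set ρ' := ρ / 2 with hρ'def
    have hρ' : 0 < ρ' := by positivity
    have hcb : Metric.closedBall z₀ ρ' ⊆ φ.target := fun w hw =>
      hρball (lt_of_le_of_lt (Metric.mem_closedBall.mp hw) (by linarith))
    set F : Set ℂ := {w | w ∈ Metric.closedBall z₀ ρ' ∧ u (φ.symm w) = 0} with hFdef
    have hFfin : F.Finite := by
      apply Set.Finite.of_finite_image (f := φ.symm)
      · exact hfin.subset (by rintro _ ⟨w, ⟨hw1, hw2⟩, rfl⟩; exact hw2)
      · exact φ.symm.injOn.mono (fun w hw => by rw [φ.symm_source]; exact hcb hw.1)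
    set B : Set ℝ := (fun w => dist w z₀) '' F with hBdef
    have hBfin : B.Finite := hFfin.image _
    have hcontU : ContinuousOn (fun w => u (φ.symm w)) φ.target :=
      hu.comp_continuousOn φ.continuousOn_symm
    set R' := min R ρ' with hR'def
    have hR'pos : 0 < R' := lt_min hR hρ'
    have hR'ρ' : R' ≤ ρ' := min_le_right _ _
    -- key: on "good" circles u ∘ φ.symm = M
    have key : ∀ r : ℝ, 0 < r → r < R' → r ∉ B →
        ∀ w : ℂ, dist w z₀ = r → u (φ.symm w) = M := by
      intro r hr hrR' hrB
      have hrρ' : r ≤ ρ' := le_of_lt (lt_of_lt_of_le hrR' hR'ρ')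
      have hmemcb : ∀ w : ℂ, dist w z₀ = r → w ∈ Metric.closedBall z₀ ρ' := fun w hw =>
        Metric.mem_closedBall.mpr (hw ▸ hrρ')
      have hpos : ∀ w : ℂ, dist w z₀ = r → 0 < u (φ.symm w) := by
        intro w hw
        rcases (h0 (φ.symm w)).lt_or_eq with h | h
        · exact h
        · have : r ∈ B := ⟨w, ⟨hmemcb w hw, h.symm⟩, hw⟩
          exact absurd this hrB
      have hle : ∀ w : ℂ, dist w z₀ = r → Real.log (u (φ.symm w)) ≤ Real.log M :=
        fun w hw => Real.log_le_log (hpos w hw) (hMmax _)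
      have hdist : ∀ θ : ℝ, dist (z₀ + (r:ℂ) * Complex.exp (θ * Complex.I)) z₀ = r := by
        intro θ
        rw [dist_eq_norm]
        simp [Complex.norm_exp_ofReal_mul_I, abs_of_pos hr]
      have hcircC : Continuous (fun θ : ℝ => z₀ + (r:ℂ) * Complex.exp (θ * Complex.I)) := by
        continuity
      have hcont : Continuous (fun θ : ℝ =>
          Real.log (u (φ.symm (z₀ + (r:ℂ) * Complex.exp (θ * Complex.I))))) := by
        apply Real.continuousOn_log.comp_continuous
          (hcontU.comp_continuous hcircC (fun θ => hcb (hmemcb _ (hdist θ))))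
        intro θ
        exact ne_of_gt (hpos _ (hdist θ))
      -- all circle points satisfy log = log M
      have heqI : ∀ θ : ℝ,
          Real.log (u (φ.symm (z₀ + (r:ℂ) * Complex.exp (θ * Complex.I)))) = Real.log M := by
        intro θ
        by_contra hne'
        have hlt : Real.log (u (φ.symm (z₀ + (r:ℂ) * Complex.exp (θ * Complex.I)))) <
            Real.log M := lt_of_le_of_ne (hle _ (hdist θ)) hne'
        have h2π : (0:ℝ) < 2 * Real.pi := by linarith
        obtain ⟨θ', hθ'1, hθ'2, hθ'exp⟩ :
            ∃ θ' : ℝ, 0 ≤ θ' ∧ θ' ≤ 2 * Real.pi ∧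
              Complex.exp ((θ':ℝ) * Complex.I) = Complex.exp ((θ:ℝ) * Complex.I) := by
          refine ⟨θ - ⌊θ / (2 * Real.pi)⌋ * (2 * Real.pi),
            Int.sub_floor_div_mul_nonneg θ h2π,
            le_of_lt (Int.sub_floor_div_mul_lt θ h2π), ?_⟩
          push_cast
          rw [sub_mul, Complex.exp_sub]
          rw [show ((⌊θ / (2 * Real.pi)⌋:ℂ) * (2 * Real.pi) * Complex.I)
              = (⌊θ / (2 * Real.pi)⌋:ℤ) * (2 * Real.pi * Complex.I) by push_cast; ring]
          rw [Complex.exp_int_mul_two_pi_mul_I, div_one]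
        have hltint : (∫ t in (0:ℝ)..(2 * Real.pi),
            Real.log (u (φ.symm (z₀ + (r:ℂ) * Complex.exp (t * Complex.I)))))
            < 2 * Real.pi * Real.log M := by
          have := intervalIntegral.integral_lt_integral_of_continuousOn_of_le_of_exists_lt
            (f := fun t : ℝ => Real.log (u (φ.symm (z₀ + (r:ℂ) * Complex.exp (t * Complex.I)))))
            (g := fun _ : ℝ => Real.log M) h2π hcont.continuousOn continuousOn_const
            (fun t _ => hle _ (hdist t))
            ⟨θ', ⟨hθ'1, hθ'2⟩,
              show Real.log (u (φ.symm (z₀ + (r:ℂ) * Complex.exp ((θ':ℝ) * Complex.I))))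
                < Real.log M by rw [hθ'exp]; exact hlt⟩
          simpa using this
        have hMle := hineq r hr (lt_of_lt_of_le hrR' (min_le_left _ _))
        simp only [show chartAt ℂ x = φ from rfl, ← hz₀] at hMle
        rw [φ.left_inv (mem_chart_source ℂ x), hux] at hMle
        have hfin' : (2 * Real.pi)⁻¹ * (∫ t in (0:ℝ)..(2 * Real.pi),
            Real.log (u (φ.symm (z₀ + (r:ℂ) * Complex.exp (t * Complex.I)))))
            < (2 * Real.pi)⁻¹ * (2 * Real.pi * Real.log M) :=
          mul_lt_mul_of_pos_left hltint (by positivity)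
        rw [inv_mul_cancel_left₀ (ne_of_gt h2π)] at hfin'
        exact absurd (lt_of_le_of_lt hMle hfin') (lt_irrefl _)
      intro w hw
      have habs : (‖w - z₀‖ : ℝ) = r := by
        rw [← hw, Complex.dist_eq]
      have hwrep : z₀ + (r:ℂ) * Complex.exp ((Complex.arg (w - z₀) : ℝ) * Complex.I) = w := by
        rw [← habs, Complex.norm_mul_exp_arg_mul_I]; ring
      have := heqI (Complex.arg (w - z₀))
      rw [hwrep] at this
      exact Real.log_injOn_pos (Set.mem_Ioi.mpr (hpos w hw)) (Set.mem_Ioi.mpr hMpos) this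
    -- density argument
    set G : Set ℂ := {w | 0 < dist w z₀ ∧ dist w z₀ < R' ∧ dist w z₀ ∉ B} with hGdef
    have hGM : ∀ w ∈ G, u (φ.symm w) = M := fun w hw => key _ hw.1 hw.2.1 hw.2.2 w rfl
    have hGsub : G ⊆ Metric.closedBall z₀ ρ' := fun w hw =>
      Metric.mem_closedBall.mpr (le_of_lt (lt_of_lt_of_le hw.2.1 hR'ρ'))
    have hdense : Metric.ball z₀ R' ⊆ closure G := by
      intro w hw
      rw [Metric.mem_closure_iff]
      intro ε hε
      set s := dist w z₀ with hsdef
      have hsR' : s < R' := Metric.mem_ball.mp hw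
      have hs0 : 0 ≤ s := dist_nonneg
      have hIooinf : (Set.Ioo s (min R' (s + ε))).Infinite :=
        Set.Ioo_infinite (lt_min hsR' (by linarith))
      obtain ⟨r, hrmem, hrB⟩ := Set.Infinite.nonempty (hIooinf.diff hBfin)
      have hr0 : 0 < r := lt_of_le_of_lt hs0 hrmem.1
      have hrR' : r < R' := lt_of_lt_of_le hrmem.2 (min_le_left _ _)
      have hrε : r - s < ε := by
        have := lt_of_lt_of_le hrmem.2 (min_le_right _ _)
        linarith
      set d : ℂ := if w = z₀ then 1 else (w - z₀) / ((‖w - z₀‖ : ℝ) : ℂ) with hddef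
      have hdnorm : ‖d‖ = 1 := by
        rw [hddef]
        split_ifs with h
        · simp
        · rw [norm_div]
          have h2 : ‖w - z₀‖ ≠ 0 := by simp [sub_eq_zero, h]
          rw [Complex.norm_real, norm_norm, div_self h2]
      have hwd : w - z₀ = (s:ℝ) * d := by
        rw [hddef]
        split_ifs with h
        · simp [h, hsdef]
        · rw [hsdef, Complex.dist_eq]
          have : ((‖w - z₀‖ : ℝ) : ℂ) ≠ 0 := by simp [sub_eq_zero, h]
          field_simp
      set p := z₀ + (r:ℂ) * d with hpdef
      have hpd : dist p z₀ = r := by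
        rw [hpdef, dist_eq_norm]
        simp [hdnorm, abs_of_pos hr0]
      refine ⟨p, ⟨?_, ?_, ?_⟩, ?_⟩
      · rw [hpd]; exact hr0
      · rw [hpd]; exact hrR'
      · rw [hpd]; exact hrB
      · rw [dist_comm, dist_eq_norm]
        have hpw : p - w = ((r:ℂ) - s) * d := by
          have hw' : w = z₀ + (s:ℂ) * d := by
            have := hwd
            rw [show w = z₀ + (w - z₀) by ring, this]
          rw [hpdef, hw']; ring
        rw [hpw]
        simp only [norm_mul, hdnorm, mul_one]
        rw [show ((r:ℂ) - s) = ((r - s : ℝ) : ℂ) by push_cast; ring]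
        rw [Complex.norm_real, Real.norm_eq_abs, abs_of_pos (by linarith [hrmem.1] : (0:ℝ) < r - s)]
        exact hrε
    have hballM : ∀ w ∈ Metric.ball z₀ R', u (φ.symm w) = M := by
      have hsubt : G ∪ Metric.ball z₀ R' ⊆ Metric.closedBall z₀ ρ' := by
        rintro w (hw | hw)
        · exact hGsub hw
        · exact Metric.closedBall_subset_closedBall hR'ρ' (Metric.ball_subset_closedBall hw)
      have heq : Set.EqOn (fun w => u (φ.symm w)) (fun _ => M) (G ∪ Metric.ball z₀ R') :=
        Set.EqOn.of_subset_closure hGM (hcontU.mono (fun w hw => hcb (hsubt hw)))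
          continuousOn_const Set.subset_union_left
          (by rintro w (hw | hw); exacts [subset_closure hw, hdense hw])
      exact fun w hw => heq (Set.mem_union_right _ hw)
    set V := φ.symm '' Metric.ball z₀ R' with hV
    have hball_sub : Metric.ball z₀ R' ⊆ φ.symm.source := by
      rw [φ.symm_source]
      exact fun w hw => hcb (Metric.closedBall_subset_closedBall hR'ρ'
        (Metric.ball_subset_closedBall hw))
    have hVopen : IsOpen V := φ.symm.isOpen_image_of_subset_source Metric.isOpen_ball hball_sub
    have hxV : x ∈ V := ⟨z₀, Metric.mem_ball_self hR'pos, φ.left_inv (mem_chart_source ℂ x)⟩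
    have hVS : V ⊆ S := by rintro _ ⟨w, hw, rfl⟩; exact hballM w hw
    exact Filter.mem_of_superset (hVopen.mem_nhds hxV) hVS
  have hSclosed : IsClosed S := isClosed_eq hu continuous_const
  have hSuniv : S = Set.univ := IsClopen.eq_univ ⟨hSclosed, hSopen⟩ ⟨x₀, rfl⟩
  exact ⟨M, hMpos, fun y => show y ∈ S from hSuniv ▸ Set.mem_univ y⟩
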